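/- For a positive invertible T ∈ B(H), the C*-log-convex hull of {T} equals {(Σᵢ Cᵢ*T⁻¹Cᵢ)⁻¹ : Σᵢ Cᵢ*Cᵢ = I}, i.e., this set is C*-log-convex, contains T, and is contained in every C*-log-convex set containing T. -/

import Mathlib

noncomputable section

/-- A subset of B(H) is C*-log-convex if it is closed under harmonic
C*-convex combinations (Σᵢ Cᵢ* Xᵢ⁻¹ Cᵢ)⁻¹. -/
def CstarLogConvex {H : Type*} [NormedAddCommGroup H] [InnerProductSpace ℂ H]
    [CompleteSpace H] (K : Set (H →L[ℂ] H)) : Prop :=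
  ∀ (n : ℕ) (X C : Fin n → H →L[ℂ] H),
    (∀ i, X i ∈ K) → ∑ i, star (C i) * C i = 1 →
      Ring.inverse (∑ i, star (C i) * Ring.inverse (X i) * C i) ∈ K

section Aux

variable {H : Type*} [NormedAddCommGroup H] [InnerProductSpace ℂ H] [CompleteSpace H]

/-- A positive invertible element dominates a positive multiple of the identity,
after inversion. -/
lemma aux_lb (T : H →L[ℂ] H) (hT : 0 ≤ T) (hTu : IsUnit T) :
    ∃ r : ℝ, 0 < r ∧ IsUnit (algebraMap ℝ (H →L[ℂ] H) r) ∧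
      0 ≤ algebraMap ℝ (H →L[ℂ] H) r ∧
      algebraMap ℝ (H →L[ℂ] H) r ≤ Ring.inverse T := by
  cases subsingleton_or_nontrivial (H →L[ℂ] H) with
  | inl h =>
    exact ⟨1, one_pos, isUnit_of_subsingleton _, le_of_eq (Subsingleton.elim _ _),
      le_of_eq (Subsingleton.elim _ _)⟩
  | inr h =>
    have hTne : T ≠ 0 := hTu.ne_zero
    have hnorm : (0 : ℝ) < ‖T‖ := norm_pos_iff.mpr hTne
    refine ⟨‖T‖⁻¹, inv_pos.mpr hnorm, ?_, ?_, ?_⟩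
    · exact (isUnit_iff_ne_zero.mpr (inv_ne_zero hnorm.ne')).map (algebraMap ℝ _)
    · have h0 : (0:ℝ) ≤ ‖T‖⁻¹ := inv_nonneg.mpr hnorm.le
      have key : algebraMap ℝ (H →L[ℂ] H) ‖T‖⁻¹ =
          star (Real.sqrt ‖T‖⁻¹ • (1 : H →L[ℂ] H)) * (Real.sqrt ‖T‖⁻¹ • 1) := by
        rw [star_smul, star_one, star_trivial, smul_mul_smul_comm, one_mul,
          Real.mul_self_sqrt h0, Algebra.algebraMap_eq_smul_one]
      rw [key]
      exact star_mul_self_nonneg _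
    · -- use antitonicity of inversion
      have hsa : IsSelfAdjoint T := IsSelfAdjoint.of_nonneg hT
      have hle : T ≤ algebraMap ℝ _ ‖T‖ := hsa.le_algebraMap_norm_self
      have hwu : IsUnit (algebraMap ℝ (H →L[ℂ] H) ‖T‖) :=
        (isUnit_iff_ne_zero.mpr hnorm.ne').map (algebraMap ℝ _)
      set u := hTu.unit
      set w := hwu.unit
      have h1 : (↑u : H →L[ℂ] H) ≤ ↑w := by
        rw [IsUnit.unit_spec, IsUnit.unit_spec]; exact hle
      have h2 : (↑w⁻¹ : H →L[ℂ] H) ≤ ↑u⁻¹ := by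
        refine CStarAlgebra.inv_le_inv ?_ h1
        rw [IsUnit.unit_spec]; exact hT
      have hw_inv : (↑w⁻¹ : H →L[ℂ] H) = algebraMap ℝ _ ‖T‖⁻¹ := by
        have : (↑w : H →L[ℂ] H) * algebraMap ℝ _ ‖T‖⁻¹ = 1 := by
          rw [IsUnit.unit_spec, ← map_mul, mul_inv_cancel₀ hnorm.ne', map_one]
        calc (↑w⁻¹ : H →L[ℂ] H) = ↑w⁻¹ * (↑w * algebraMap ℝ _ ‖T‖⁻¹) := by
              rw [this, mul_one]
          _ = algebraMap ℝ _ ‖T‖⁻¹ := by rw [← mul_assoc, Units.inv_mul, one_mul]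
      have hu_inv : (↑u⁻¹ : H →L[ℂ] H) = Ring.inverse T := by
        rw [← IsUnit.unit_spec hTu, Ring.inverse_unit]
      rw [← hw_inv, ← hu_inv]; exact h2

/-- Harmonic C*-combinations of a positive invertible element are invertible. -/
lemma aux_unit (T : H →L[ℂ] H) (hT : 0 ≤ T) (hTu : IsUnit T)
    {n : ℕ} (C : Fin n → H →L[ℂ] H) (hC : ∑ i, star (C i) * C i = 1) :
    IsUnit (∑ i, star (C i) * Ring.inverse T * C i) := by
  obtain ⟨r, hr, hu, hnn, hle⟩ := aux_lb T hT hTu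
  refine CStarAlgebra.isUnit_of_le _ ?_ ⟨hnn, hu⟩
  calc algebraMap ℝ (H →L[ℂ] H) r = algebraMap ℝ _ r * 1 := (mul_one _).symm
    _ = ∑ i, algebraMap ℝ (H →L[ℂ] H) r * (star (C i) * C i) := by
        rw [← Finset.mul_sum, hC]
    _ = ∑ i, star (C i) * algebraMap ℝ (H →L[ℂ] H) r * C i := by
        refine Finset.sum_congr rfl fun i _ => ?_
        rw [← mul_assoc, ← Algebra.commutes]
    _ ≤ ∑ i, star (C i) * Ring.inverse T * C i :=
        Finset.sum_le_sum fun i _ => by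
          simpa only [mul_assoc] using star_left_conjugate_le_conjugate hle (C i)

omit [CompleteSpace H] in
lemma aux_inv_inv {a : H →L[ℂ] H} (ha : IsUnit a) :
    Ring.inverse (Ring.inverse a) = a := by
  obtain ⟨u, rfl⟩ := ha
  rw [Ring.inverse_unit]
  exact (Ring.inverse_unit u⁻¹).trans (by simp)

end Aux

/-- For a positive invertible T, the set {(Σᵢ Cᵢ*T⁻¹Cᵢ)⁻¹ : Σᵢ Cᵢ*Cᵢ = I} is
the C*-log-convex hull of {T}: it is C*-log-convex, contains T, and is
contained in every C*-log-convex set (of positive invertible operators)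
containing T. -/
theorem cstarLogConvexHull_singleton {H : Type*} [NormedAddCommGroup H]
    [InnerProductSpace ℂ H] [CompleteSpace H] (T : H →L[ℂ] H)
    (hT : 0 ≤ T) (hTinv : IsUnit T) :
    CstarLogConvex {X : H →L[ℂ] H | ∃ (n : ℕ) (C : Fin n → H →L[ℂ] H),
        ∑ i, star (C i) * C i = 1 ∧
        X = Ring.inverse (∑ i, star (C i) * Ring.inverse T * C i)} ∧
    T ∈ {X : H →L[ℂ] H | ∃ (n : ℕ) (C : Fin n → H →L[ℂ] H),
        ∑ i, star (C i) * C i = 1 ∧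
        X = Ring.inverse (∑ i, star (C i) * Ring.inverse T * C i)} ∧
    ∀ K : Set (H →L[ℂ] H), (∀ X ∈ K, 0 ≤ X ∧ IsUnit X) → CstarLogConvex K →
      T ∈ K →
      {X : H →L[ℂ] H | ∃ (n : ℕ) (C : Fin n → H →L[ℂ] H),
        ∑ i, star (C i) * C i = 1 ∧
        X = Ring.inverse (∑ i, star (C i) * Ring.inverse T * C i)} ⊆ K := by
  refine ⟨?_, ?_, ?_⟩
  · -- C*-log-convexity
    intro n X D hX hD
    choose m C hC hXeq using hX
    have hSu : ∀ i, IsUnit (∑ j, star (C i j) * Ring.inverse T * C i j) :=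
      fun i => aux_unit T hT hTinv (C i) (hC i)
    have hXinv : ∀ i, Ring.inverse (X i) = ∑ j, star (C i j) * Ring.inverse T * C i j := by
      intro i
      rw [hXeq i, aux_inv_inv (hSu i)]
    set σ := (Σ i : Fin n, Fin (m i)) with hσ
    set N := Fintype.card σ with hN
    set e : σ ≃ Fin N := Fintype.equivFin σ with he
    set E : Fin N → H →L[ℂ] H :=
      fun k => C (e.symm k).1 (e.symm k).2 * D (e.symm k).1 with hE
    have hEe : ∀ x : σ, E (e x) = C x.1 x.2 * D x.1 := by
      intro x
      show C (e.symm (e x)).1 (e.symm (e x)).2 * D (e.symm (e x)).1 = _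
      rw [Equiv.symm_apply_apply]
    have hsum : ∀ a : H →L[ℂ] H, ∑ k, star (E k) * a * E k
        = ∑ i, star (D i) * (∑ j, star (C i j) * a * C i j) * D i := by
      intro a
      rw [← Equiv.sum_comp e (fun k => star (E k) * a * E k)]
      simp only [hEe]
      rw [← Finset.univ_sigma_univ, Finset.sum_sigma]
      refine Finset.sum_congr rfl fun i _ => ?_
      rw [Finset.mul_sum, Finset.sum_mul]
      refine Finset.sum_congr rfl fun j _ => ?_
      simp [star_mul, mul_assoc]
    refine ⟨N, E, ?_, ?_⟩
    · calc ∑ k, star (E k) * E k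
          = ∑ i, star (D i) * (∑ j, star (C i j) * C i j) * D i := by
            simpa using hsum 1
        _ = 1 := by simp only [hC, mul_one]; exact hD
    · congr 1
      rw [hsum (Ring.inverse T)]
      exact Finset.sum_congr rfl fun i _ => by rw [hXinv i]
  · -- contains T
    refine ⟨1, fun _ => 1, by simp, ?_⟩
    simp only [star_one, one_mul, mul_one, Finset.sum_const, Finset.card_univ,
      Fintype.card_fin, one_smul]
    exact (aux_inv_inv hTinv).symm
  · -- minimality
    intro K _ hK hTK X hXmem
    obtain ⟨n, C, hC, rfl⟩ := hXmem
    exact hK n (fun _ => T) C (fun _ => hTK) hC
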